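/- Let g : Fin h → ℝ^n be generators, let E : Fin r → Fin h → ℕ be an exponent matrix, and fix a split index s : Fin r. Define PZ = { ∑_i (∏_k (α k)^{E k i}) • g i | α : Fin r → ℝ, α k ∈ [-1,1] for all k }, PZ₁ = { ∑_i (∏_{k ≠ s} (α k)^{E k i}) · ((1 + α s)/2)^{E s i} • g i | α : Fin r → ℝ, α k ∈ [-1,1] for all k }, and PZ₂ = { ∑_i (∏_{k ≠ s} (α k)^{E k i}) · (-(1 + α s)/2)^{E s i} • g i | α : Fin r → ℝ, α k ∈ [-1,1] for all k }. Then PZ = PZ₁ ∪ PZ₂. -/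
import Mathlib

private lemma update_prod_erase {r : ℕ} (s : Fin r) (α : Fin r → ℝ) (c : ℝ)
    (e : Fin r → ℕ) :
    ∏ k ∈ Finset.univ.erase s, (Function.update α s c k) ^ (e k)
      = ∏ k ∈ Finset.univ.erase s, (α k) ^ (e k) := by
  refine Finset.prod_congr rfl fun k hk => ?_
  rw [Function.update_of_ne (Finset.ne_of_mem_erase hk)]

/-- Splitting a (dependent part of a) polynomial zonotope at factor index `s`:
the set `PZ` equals the union `PZ₁ ∪ PZ₂` obtained by substituting `(1 + α s)/2`
and `-(1 + α s)/2` for the factor `α s`. -/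
theorem polyZonotope_split {n h r : ℕ} (g : Fin h → (Fin n → ℝ))
    (E : Fin r → Fin h → ℕ) (s : Fin r) :
    { v : Fin n → ℝ | ∃ α : Fin r → ℝ, (∀ k, α k ∈ Set.Icc (-1 : ℝ) 1) ∧
        v = ∑ i, (∏ k, (α k) ^ (E k i)) • g i }
    = { v : Fin n → ℝ | ∃ α : Fin r → ℝ, (∀ k, α k ∈ Set.Icc (-1 : ℝ) 1) ∧
          v = ∑ i, ((∏ k ∈ Finset.univ.erase s, (α k) ^ (E k i))
                * ((1 + α s) / 2) ^ (E s i)) • g i }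
      ∪ { v : Fin n → ℝ | ∃ α : Fin r → ℝ, (∀ k, α k ∈ Set.Icc (-1 : ℝ) 1) ∧
          v = ∑ i, ((∏ k ∈ Finset.univ.erase s, (α k) ^ (E k i))
                * (-(1 + α s) / 2) ^ (E s i)) • g i } := by
  have key : ∀ α : Fin r → ℝ, ∀ i : Fin h,
      ∏ k, (α k) ^ (E k i)
        = (∏ k ∈ Finset.univ.erase s, (α k) ^ (E k i)) * (α s) ^ (E s i) := by
    intro α i
    rw [Finset.prod_erase_mul _ _ (Finset.mem_univ s)]
  ext v
  constructor
  · rintro ⟨α, hα, rfl⟩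
    rcases le_or_gt 0 (α s) with hs | hs
    · left
      refine ⟨Function.update α s (2 * α s - 1), ?_, ?_⟩
      · intro k
        rcases eq_or_ne k s with rfl | hk
        · rw [Function.update_self]
          constructor <;> nlinarith [(hα k).1, (hα k).2]
        · rw [Function.update_of_ne hk]; exact hα k
      · refine Finset.sum_congr rfl fun i _ => ?_
        rw [key α i, update_prod_erase, Function.update_self]
        norm_num
    · right
      refine ⟨Function.update α s (-2 * α s - 1), ?_, ?_⟩
      · intro k
        rcases eq_or_ne k s with rfl | hk
        · rw [Function.update_self]
          constructor <;> nlinarith [(hα k).1, (hα k).2]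
        · rw [Function.update_of_ne hk]; exact hα k
      · refine Finset.sum_congr rfl fun i _ => ?_
        rw [key α i, update_prod_erase, Function.update_self]
        norm_num
  · rintro (⟨α, hα, rfl⟩ | ⟨α, hα, rfl⟩)
    · refine ⟨Function.update α s ((1 + α s) / 2), ?_, ?_⟩
      · intro k
        rcases eq_or_ne k s with rfl | hk
        · rw [Function.update_self]
          constructor <;> nlinarith [(hα k).1, (hα k).2]
        · rw [Function.update_of_ne hk]; exact hα k
      · refine Finset.sum_congr rfl fun i _ => ?_
        rw [key _ i, update_prod_erase, Function.update_self]
    · refine ⟨Function.update α s (-(1 + α s) / 2), ?_, ?_⟩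
      · intro k
        rcases eq_or_ne k s with rfl | hk
        · rw [Function.update_self]
          constructor <;> nlinarith [(hα k).1, (hα k).2]
        · rw [Function.update_of_ne hk]; exact hα k
      · refine Finset.sum_congr rfl fun i _ => ?_
        rw [key _ i, update_prod_erase, Function.update_self]
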